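/- Fix r_I, R_p, R_I > 0, μ > 0, d ≥ 0, and points a, b ∈ ℝ² with dist(a, b) = d. Then the closed-form false-alarm probability r_D ↦ P_F(r_D) = 1 − exp(−μ(π r_D² − S_I(d, r_D, R_I) − ∫_{S_o(r_D)} g(x) dx)) is nondecreasing on [0, ∞), and the closed-form miss-detection probability r_D ↦ P_MD(r_D) = (exp(−μ π r_D²) − exp(−μ(π(r_D² + R_I²) − S_I(d, r_D, R_I) + ∫_{S_c(r_I+R_p) \ S_o(r_D)} g(x) dx)))/(1 − exp(−μ(Q + π R_I²))) is nonincreasing on [0, ∞). (This is the paper's claim that, for listen-before-talk, P_F increases and P_MD decreases as the detection range r_D increases.) -/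

import Mathlib

open MeasureTheory Metric Real

/-- `SI d r₁ r₂` is the area (two-dimensional Lebesgue measure) of the intersection of
two closed disks in the plane of radii `r₁` and `r₂` whose centers are at distance `d`. -/
noncomputable def SI (d r₁ r₂ : ℝ) : ℝ :=
  (volume (closedBall (0 : EuclideanSpace ℝ (Fin 2)) r₁ ∩
    closedBall (EuclideanSpace.single (0 : Fin 2) d) r₂)).toReal

/-- Closed-form false-alarm probability of listen-before-talk (Proposition 2, eq. (6)),
as a function of the detection range `r_D`. -/
noncomputable def pF (a b : EuclideanSpace ℝ (Fin 2)) (μ R_p R_I r_I d r_D : ℝ) : ℝ :=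
  1 - Real.exp (-μ * (π * r_D ^ 2 - SI d r_D R_I -
    ∫ x in closedBall a (min r_D (r_I + R_p)) \ closedBall b R_I,
      SI ‖x - a‖ R_p r_I / (π * R_p ^ 2)))

/-- Closed-form miss-detection probability of listen-before-talk (Proposition 2, eq. (7)),
as a function of the detection range `r_D`. -/
noncomputable def pMD (a b : EuclideanSpace ℝ (Fin 2)) (μ R_p R_I r_I d r_D : ℝ) : ℝ :=
  (Real.exp (-μ * (π * r_D ^ 2)) -
    Real.exp (-μ * (π * (r_D ^ 2 + R_I ^ 2) - SI d r_D R_I +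
      ∫ x in (closedBall a (r_I + R_p) \ closedBall b R_I) \
              (closedBall a (min r_D (r_I + R_p)) \ closedBall b R_I),
        SI ‖x - a‖ R_p r_I / (π * R_p ^ 2)))) /
  (1 - Real.exp (-μ * ((∫ x in closedBall a (r_I + R_p) \ closedBall b R_I,
      SI ‖x - a‖ R_p r_I / (π * R_p ^ 2)) + π * R_I ^ 2)))

local notation "E2" => EuclideanSpace ℝ (Fin 2)

lemma vol_cb (x : E2) {r : ℝ} (hr : 0 ≤ r) :
    volume (closedBall x r) = ENNReal.ofReal (π * r ^ 2) := by
  rw [EuclideanSpace.volume_closedBall, Fintype.card_fin]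
  have h2 : ((2 : ℕ) : ℝ) / 2 + 1 = 2 := by norm_num
  rw [h2, Real.Gamma_two, sq_sqrt pi_nonneg]
  rw [← ENNReal.ofReal_pow hr, ← ENNReal.ofReal_mul (by positivity), div_one, mul_comm]

lemma SI_eq (a b : E2) (d r R : ℝ) (hd : 0 ≤ d) (hab : dist a b = d) :
    SI d r R = (volume (closedBall a r ∩ closedBall b R)).toReal := by
  set w : E2 := EuclideanSpace.single (0 : Fin 2) d with hw_def
  have hw : ‖w‖ = d := by
    have h := EuclideanSpace.dist_single_same (𝕜 := ℝ) (0 : Fin 2) d 0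
    simpa [hw_def, dist_eq_norm, abs_of_nonneg hd] using h
  have hba : ‖b - a‖ = d := by
    rw [← hab, dist_eq_norm, norm_sub_rev]
  set L : E2 ≃ₗᵢ[ℝ] E2 := Submodule.reflection (ℝ ∙ ((b - a) - w))ᗮ with hL_def
  have hL : L (b - a) = w := Submodule.reflection_sub (by rw [hba, hw])
  have hf : MeasurePreserving (fun x : E2 => L (x - a)) volume volume :=
    L.measurePreserving.comp (measurePreserving_sub_right volume a)
  have hpre : (fun x : E2 => L (x - a)) ⁻¹' (closedBall 0 r ∩ closedBall w R)
      = closedBall a r ∩ closedBall b R := by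
    ext x
    simp only [Set.mem_preimage, Set.mem_inter_iff, mem_closedBall, dist_eq_norm]
    constructor
    · rintro ⟨h1, h2⟩
      refine ⟨?_, ?_⟩
      · rwa [sub_zero, L.norm_map] at h1
      · rw [← hL, ← map_sub, L.norm_map] at h2
        simpa using h2
    · rintro ⟨h1, h2⟩
      refine ⟨?_, ?_⟩
      · rwa [sub_zero, L.norm_map]
      · rw [← hL, ← map_sub, L.norm_map]
        simpa using h2
  have := hf.measure_preimage (s := closedBall (0:E2) r ∩ closedBall w R)
    ((measurableSet_closedBall.inter measurableSet_closedBall).nullMeasurableSet)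
  unfold SI
  rw [← hw_def, ← this, hpre]

lemma SI_nonneg (d r₁ r₂ : ℝ) : 0 ≤ SI d r₁ r₂ := ENNReal.toReal_nonneg

lemma SI_le_left (d r₁ r₂ : ℝ) (h : 0 ≤ r₁) : SI d r₁ r₂ ≤ π * r₁ ^ 2 := by
  unfold SI
  have hv := vol_cb (0 : E2) h
  calc (volume (closedBall (0:E2) r₁ ∩ closedBall (EuclideanSpace.single (0:Fin 2) d) r₂)).toReal
      ≤ (volume (closedBall (0:E2) r₁)).toReal :=
        ENNReal.toReal_mono (by rw [hv]; exact ENNReal.ofReal_ne_top)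
          (measure_mono Set.inter_subset_left)
    _ = π * r₁ ^ 2 := by rw [hv, ENNReal.toReal_ofReal (by positivity)]

lemma SI_mono_left (d r r' R : ℝ) (h : r ≤ r') : SI d r R ≤ SI d r' R := by
  unfold SI
  refine ENNReal.toReal_mono ?_ (measure_mono (Set.inter_subset_inter_left _
    (closedBall_subset_closedBall h)))
  exact (lt_of_le_of_lt (measure_mono Set.inter_subset_left) measure_closedBall_lt_top).ne

lemma g_meas (a : E2) (R_p r_I : ℝ) :
    Measurable (fun x : E2 => SI ‖x - a‖ R_p r_I / (π * R_p ^ 2)) := by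
  set S : Set (E2 × E2) := {p : E2 × E2 | dist p.2 (0:E2) ≤ R_p ∧ dist p.2 p.1 ≤ r_I} with hS_def
  have hs : MeasurableSet S := by
    have h1 : MeasurableSet {p : E2 × E2 | dist p.2 (0:E2) ≤ R_p} :=
      measurableSet_le (continuous_snd.dist continuous_const).measurable measurable_const
    have h2 : MeasurableSet {p : E2 × E2 | dist p.2 p.1 ≤ r_I} :=
      measurableSet_le (continuous_snd.dist continuous_fst).measurable measurable_const
    exact h1.inter h2
  have hF : Measurable fun v : E2 => volume (Prod.mk v ⁻¹' S) :=
    measurable_measure_prodMk_left hs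
  have hsing : Isometry (fun t : ℝ => EuclideanSpace.single (0 : Fin 2) t) :=
    Isometry.of_dist_eq fun t s => EuclideanSpace.dist_single_same 0 t s
  have hx : Measurable fun x : E2 => EuclideanSpace.single (0 : Fin 2) ‖x - a‖ :=
    (hsing.continuous.comp ((continuous_id.sub continuous_const).norm)).measurable
  have key : (fun x : E2 => SI ‖x - a‖ R_p r_I / (π * R_p ^ 2))
      = fun x : E2 => (volume (Prod.mk (EuclideanSpace.single (0 : Fin 2) ‖x - a‖) ⁻¹' S)).toReal
          / (π * R_p ^ 2) := by
    funext x
    rw [show Prod.mk (EuclideanSpace.single (0:Fin 2) ‖x - a‖) ⁻¹' S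
        = closedBall (0:E2) R_p ∩ closedBall (EuclideanSpace.single (0:Fin 2) ‖x - a‖) r_I from by
      ext y
      simp [hS_def, mem_closedBall, Set.mem_preimage, Set.mem_inter_iff]]
    rfl
  rw [key]
  exact ((hF.comp hx).ennreal_toReal).div_const _

/-- For listen-before-talk, the closed-form `P_F` is nondecreasing and the closed-form
`P_MD` is nonincreasing in the detection range `r_D` on `[0, ∞)`. -/
theorem pF_mono_pMD_anti_in_rD (r_I R_p R_I μ d : ℝ)
    (hrI : 0 < r_I) (hRp : 0 < R_p) (hRI : 0 < R_I) (hμ : 0 < μ) (hd : 0 ≤ d)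
    (a b : EuclideanSpace ℝ (Fin 2)) (hab : dist a b = d) :
    MonotoneOn (fun r_D => pF a b μ R_p R_I r_I d r_D) (Set.Ici (0:ℝ)) ∧
    AntitoneOn (fun r_D => pMD a b μ R_p R_I r_I d r_D) (Set.Ici (0:ℝ)) := by
  have hT : 0 < r_I + R_p := by linarith
  -- notation
  have hg0 : ∀ x : E2, 0 ≤ SI ‖x - a‖ R_p r_I / (π * R_p ^ 2) :=
    fun x => div_nonneg (SI_nonneg _ _ _) (by positivity)
  have hg1 : ∀ x : E2, SI ‖x - a‖ R_p r_I / (π * R_p ^ 2) ≤ 1 := fun x => by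
    rw [div_le_one (by positivity)]
    exact SI_le_left _ _ _ hRp.le
  have hgm := g_meas a R_p r_I
  have hSm : ∀ ρ : ℝ, MeasurableSet (closedBall a ρ \ closedBall b R_I) :=
    fun ρ => measurableSet_closedBall.diff measurableSet_closedBall
  have hSfin : ∀ ρ : ℝ, volume (closedBall a ρ \ closedBall b R_I) < ⊤ :=
    fun ρ => lt_of_le_of_lt (measure_mono Set.diff_subset) measure_closedBall_lt_top
  have hgint : ∀ s : Set E2, MeasurableSet s → volume s < ⊤ →
      IntegrableOn (fun x : E2 => SI ‖x - a‖ R_p r_I / (π * R_p ^ 2)) s := by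
    intro s hs hv
    refine Integrable.mono' (g := fun _ => (1:ℝ)) (integrableOn_const hv.ne)
      hgm.aestronglyMeasurable (ae_of_all _ fun x => ?_)
    rw [Real.norm_of_nonneg (hg0 x)]
    exact hg1 x
  have hSsub : ∀ {ρ ρ' : ℝ}, ρ ≤ ρ' →
      closedBall a ρ \ closedBall b R_I ⊆ closedBall a ρ' \ closedBall b R_I :=
    fun h => Set.diff_subset_diff_left (closedBall_subset_closedBall h)
  -- area identity: π ρ² − SI d ρ R_I = vol(B(a,ρ) \ B(b,R_I))
  have hvolS : ∀ ρ : ℝ, 0 ≤ ρ →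
      π * ρ ^ 2 - SI d ρ R_I = (volume (closedBall a ρ \ closedBall b R_I)).toReal := by
    intro ρ hρ
    rw [SI_eq a b d ρ R_I hd hab]
    have hdecomp := measure_diff_add_inter (μ := volume) (closedBall a ρ)
      (measurableSet_closedBall (x := b) (ε := R_I))
    have hfin1 : volume (closedBall a ρ ∩ closedBall b R_I) ≠ ⊤ :=
      (lt_of_le_of_lt (measure_mono Set.inter_subset_left) measure_closedBall_lt_top).ne
    have h3 : (volume (closedBall a ρ \ closedBall b R_I)).toReal
        + (volume (closedBall a ρ ∩ closedBall b R_I)).toReal = π * ρ ^ 2 := by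
      rw [← ENNReal.toReal_add (hSfin ρ).ne hfin1, hdecomp, vol_cb a hρ,
        ENNReal.toReal_ofReal (by positivity)]
    linarith
  -- difference of volumes
  have hvoldiff : ∀ {ρ ρ' : ℝ}, ρ ≤ ρ' →
      (volume ((closedBall a ρ' \ closedBall b R_I) \ (closedBall a ρ \ closedBall b R_I))).toReal
        = (volume (closedBall a ρ' \ closedBall b R_I)).toReal
          - (volume (closedBall a ρ \ closedBall b R_I)).toReal := by
    intro ρ ρ' h
    have hdecomp := measure_diff_add_inter (μ := volume) (closedBall a ρ' \ closedBall b R_I) (hSm ρ)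
    rw [Set.inter_eq_self_of_subset_right (hSsub h)] at hdecomp
    have h4 : (volume ((closedBall a ρ' \ closedBall b R_I) \ (closedBall a ρ \ closedBall b R_I))).toReal
        + (volume (closedBall a ρ \ closedBall b R_I)).toReal
        = (volume (closedBall a ρ' \ closedBall b R_I)).toReal := by
      rw [← ENNReal.toReal_add
        (lt_of_le_of_lt (measure_mono Set.diff_subset) (hSfin ρ')).ne (hSfin ρ).ne, hdecomp]
    linarith
  -- integral of g over a finite measurable set is at most its volume
  have hintle : ∀ t : Set E2, MeasurableSet t → volume t < ⊤ →
      (∫ x in t, SI ‖x - a‖ R_p r_I / (π * R_p ^ 2)) ≤ (volume t).toReal := by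
    intro t ht hv
    have hb := norm_setIntegral_le_of_norm_le_const (C := 1) hv (fun x _ => by
      rw [Real.norm_of_nonneg (hg0 x)]; exact hg1 x)
    calc (∫ x in t, SI ‖x - a‖ R_p r_I / (π * R_p ^ 2))
        ≤ ‖∫ x in t, SI ‖x - a‖ R_p r_I / (π * R_p ^ 2)‖ := le_abs_self _
      _ ≤ 1 * (volume t).toReal := hb
      _ = (volume t).toReal := one_mul _
  -- the annulus inclusion
  have hsub2 : ∀ {r r' : ℝ}, r ≤ r' →
      (closedBall a (min r' (r_I + R_p)) \ closedBall b R_I)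
          \ (closedBall a (min r (r_I + R_p)) \ closedBall b R_I)
        ⊆ (closedBall a r' \ closedBall b R_I) \ (closedBall a r \ closedBall b R_I) := by
    intro r r' h x hx
    obtain ⟨⟨hx1, hx1b⟩, hx2⟩ := hx
    refine ⟨⟨closedBall_subset_closedBall (min_le_left _ _) hx1, hx1b⟩, fun hxr => ?_⟩
    obtain ⟨hxa, hxb⟩ := hxr
    exact hx2 ⟨mem_closedBall.2 (le_min (mem_closedBall.1 hxa)
      (le_trans (mem_closedBall.1 hx1) (min_le_right _ _))), hxb⟩
  -- the key monotone quantity for pF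
  have hA : ∀ r r' : ℝ, 0 ≤ r → r ≤ r' →
      π * r ^ 2 - SI d r R_I -
        (∫ x in closedBall a (min r (r_I + R_p)) \ closedBall b R_I,
          SI ‖x - a‖ R_p r_I / (π * R_p ^ 2))
      ≤ π * r' ^ 2 - SI d r' R_I -
        (∫ x in closedBall a (min r' (r_I + R_p)) \ closedBall b R_I,
          SI ‖x - a‖ R_p r_I / (π * R_p ^ 2)) := by
    intro r r' hr hrr
    have hr' : 0 ≤ r' := hr.trans hrr
    have hm : min r (r_I + R_p) ≤ min r' (r_I + R_p) := min_le_min hrr le_rfl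
    have hdiffint : (∫ x in (closedBall a (min r' (r_I + R_p)) \ closedBall b R_I)
            \ (closedBall a (min r (r_I + R_p)) \ closedBall b R_I),
          SI ‖x - a‖ R_p r_I / (π * R_p ^ 2))
        = (∫ x in closedBall a (min r' (r_I + R_p)) \ closedBall b R_I,
            SI ‖x - a‖ R_p r_I / (π * R_p ^ 2))
          - (∫ x in closedBall a (min r (r_I + R_p)) \ closedBall b R_I,
            SI ‖x - a‖ R_p r_I / (π * R_p ^ 2)) :=
      integral_diff (hSm _) (hgint _ (hSm _) (hSfin _)) (hSsub hm)
    have hΔmeas : MeasurableSet ((closedBall a (min r' (r_I + R_p)) \ closedBall b R_I)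
        \ (closedBall a (min r (r_I + R_p)) \ closedBall b R_I)) := (hSm _).diff (hSm _)
    have hΔfin : volume ((closedBall a (min r' (r_I + R_p)) \ closedBall b R_I)
        \ (closedBall a (min r (r_I + R_p)) \ closedBall b R_I)) < ⊤ :=
      lt_of_le_of_lt (measure_mono Set.diff_subset) (hSfin _)
    have hle1 := hintle _ hΔmeas hΔfin
    have hle2 : (volume ((closedBall a (min r' (r_I + R_p)) \ closedBall b R_I)
          \ (closedBall a (min r (r_I + R_p)) \ closedBall b R_I))).toReal
        ≤ (volume ((closedBall a r' \ closedBall b R_I)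
          \ (closedBall a r \ closedBall b R_I))).toReal := by
      refine ENNReal.toReal_mono ?_ (measure_mono (hsub2 hrr))
      exact (lt_of_le_of_lt (measure_mono Set.diff_subset) (hSfin r')).ne
    have hv := hvoldiff hrr
    have h1 := hvolS r hr
    have h2 := hvolS r' hr'
    linarith
  constructor
  · -- pF monotone
    intro r hr r' hr' hrr
    simp only [pF]
    have key := hA r r' hr hrr
    have := Real.exp_le_exp.2 (mul_le_mul_of_nonpos_left key (by linarith : -μ ≤ 0))
    linarith
  · -- pMD antitone
    intro r hr r' hr' hrr
    simp only [pMD]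
    set Q : ℝ := ∫ x in closedBall a (r_I + R_p) \ closedBall b R_I,
      SI ‖x - a‖ R_p r_I / (π * R_p ^ 2) with hQ_def
    have hQ : 0 ≤ Q := setIntegral_nonneg (hSm _) (fun x _ => hg0 x)
    have hD : 0 < 1 - Real.exp (-μ * (Q + π * R_I ^ 2)) := by
      have hpos : 0 < π * R_I ^ 2 := by positivity
      have : -μ * (Q + π * R_I ^ 2) < 0 := by nlinarith
      have := Real.exp_lt_one_iff.2 this
      linarith
    -- J terms
    have hJ : ∀ ρ : ℝ, 0 ≤ ∫ x in (closedBall a (r_I + R_p) \ closedBall b R_I)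
          \ (closedBall a (min ρ (r_I + R_p)) \ closedBall b R_I),
        SI ‖x - a‖ R_p r_I / (π * R_p ^ 2) :=
      fun ρ => setIntegral_nonneg ((hSm _).diff (hSm _)) (fun x _ => hg0 x)
    have hJanti : (∫ x in (closedBall a (r_I + R_p) \ closedBall b R_I)
          \ (closedBall a (min r' (r_I + R_p)) \ closedBall b R_I),
          SI ‖x - a‖ R_p r_I / (π * R_p ^ 2))
        ≤ ∫ x in (closedBall a (r_I + R_p) \ closedBall b R_I)
          \ (closedBall a (min r (r_I + R_p)) \ closedBall b R_I),
          SI ‖x - a‖ R_p r_I / (π * R_p ^ 2) := by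
      refine setIntegral_mono_set (hgint _ ((hSm _).diff (hSm _))
        (lt_of_le_of_lt (measure_mono Set.diff_subset) (hSfin _)))
        (ae_of_all _ hg0) (HasSubset.Subset.eventuallyLE ?_)
      exact Set.diff_subset_diff_right (hSsub (min_le_min hrr le_rfl))
    -- abbreviations for the C quantities
    set Cr : ℝ := π * R_I ^ 2 - SI d r R_I + ∫ x in (closedBall a (r_I + R_p) \ closedBall b R_I)
          \ (closedBall a (min r (r_I + R_p)) \ closedBall b R_I),
        SI ‖x - a‖ R_p r_I / (π * R_p ^ 2) with hCr_def
    set Cr' : ℝ := π * R_I ^ 2 - SI d r' R_I + ∫ x in (closedBall a (r_I + R_p) \ closedBall b R_I)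
          \ (closedBall a (min r' (r_I + R_p)) \ closedBall b R_I),
        SI ‖x - a‖ R_p r_I / (π * R_p ^ 2) with hCr'_def
    have hSIle : ∀ ρ : ℝ, SI d ρ R_I ≤ π * R_I ^ 2 := by
      intro ρ
      rw [SI_eq a b d ρ R_I hd hab]
      have hv := vol_cb b hRI.le
      calc (volume (closedBall a ρ ∩ closedBall b R_I)).toReal
          ≤ (volume (closedBall b R_I)).toReal :=
            ENNReal.toReal_mono (by rw [hv]; exact ENNReal.ofReal_ne_top)
              (measure_mono Set.inter_subset_right)
        _ = π * R_I ^ 2 := by rw [hv, ENNReal.toReal_ofReal (by positivity)]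
    have hCr0 : 0 ≤ Cr := by
      have := hSIle r; have := hJ r; rw [hCr_def]; linarith
    have hCr'0 : 0 ≤ Cr' := by
      have := hSIle r'; have := hJ r'; rw [hCr'_def]; linarith
    have hCanti : Cr' ≤ Cr := by
      have hSImono := SI_mono_left d r r' R_I hrr
      rw [hCr_def, hCr'_def]; linarith
    -- rewrite the numerators in factored form
    have hfact : ∀ ρ C : ℝ, Real.exp (-μ * (π * ρ ^ 2)) -
        Real.exp (-μ * (π * ρ ^ 2)) * Real.exp (-μ * C)
        = Real.exp (-μ * (π * ρ ^ 2)) * (1 - Real.exp (-μ * C)) := by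
      intro ρ C; ring
    -- the numerator inequality
    have hnumineq : Real.exp (-μ * (π * r' ^ 2)) * (1 - Real.exp (-μ * Cr'))
        ≤ Real.exp (-μ * (π * r ^ 2)) * (1 - Real.exp (-μ * Cr)) := by
      have h1 : Real.exp (-μ * (π * r' ^ 2)) ≤ Real.exp (-μ * (π * r ^ 2)) := by
        apply Real.exp_le_exp.2
        have hsq : r ^ 2 ≤ r' ^ 2 := by nlinarith [Set.mem_Ici.1 hr]
        have := mul_le_mul_of_nonneg_left hsq (mul_pos hμ pi_pos).le
        nlinarith [this]
      have h2 : 1 - Real.exp (-μ * Cr') ≤ 1 - Real.exp (-μ * Cr) := by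
        have : -μ * Cr ≤ -μ * Cr' := by
          have := mul_le_mul_of_nonneg_left hCanti hμ.le
          linarith
        have := Real.exp_le_exp.2 this
        linarith
      have h3 : 0 ≤ 1 - Real.exp (-μ * Cr') := by
        have : -μ * Cr' ≤ 0 := by
          have := mul_nonneg hμ.le hCr'0
          linarith
        have := Real.exp_le_one_iff.2 this
        linarith
      exact mul_le_mul h1 h2 h3 (Real.exp_nonneg _)
    -- put everything together
    have hexp_r : Real.exp (-μ * (π * (r ^ 2 + R_I ^ 2) - SI d r R_I +
          ∫ x in (closedBall a (r_I + R_p) \ closedBall b R_I)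
            \ (closedBall a (min r (r_I + R_p)) \ closedBall b R_I),
          SI ‖x - a‖ R_p r_I / (π * R_p ^ 2)))
        = Real.exp (-μ * (π * r ^ 2)) * Real.exp (-μ * Cr) := by
      rw [← Real.exp_add]
      congr 1
      rw [hCr_def]
      ring
    have hexp_r' : Real.exp (-μ * (π * (r' ^ 2 + R_I ^ 2) - SI d r' R_I +
          ∫ x in (closedBall a (r_I + R_p) \ closedBall b R_I)
            \ (closedBall a (min r' (r_I + R_p)) \ closedBall b R_I),
          SI ‖x - a‖ R_p r_I / (π * R_p ^ 2)))
        = Real.exp (-μ * (π * r' ^ 2)) * Real.exp (-μ * Cr') := by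
      rw [← Real.exp_add]
      congr 1
      rw [hCr'_def]
      ring
    rw [hexp_r, hexp_r']
    rw [div_le_div_iff_of_pos_right hD]
    have e1 := hfact r' Cr'
    have e2 := hfact r Cr
    linarith [hnumineq]
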